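/- Conjecture 3.1 (proved in the paper): Consider a binary reaction network, i.e. ‖y_k‖₁ ≤ 2 and ‖y'_k‖₁ ≤ 2 for all k. Suppose c : [0,∞) → ℝ^d_{>0} is differentiable, solves the mass-action ODE c'(t) = Σ_k κ_k c(t)^{y_k} ζ_k with c(0) = c̃ ∈ ℝ^d_{>0}, and satisfies B_{ij}(c(t)) = 0 for all i,j ∈ {1,…,d} and all t ≥ 0. Then P(x,t) := ∏_{i=1}^d e^{−c_i(t)} c_i(t)^{x_i}/x_i! solves the chemical master equation with initial condition P(x,0) = ∏_{i=1}^d e^{−c̃_i} c̃_i^{x_i}/x_i!; that is, if the initial distribution is a product of Poissons and the Poisson-representation diffusion matrix vanishes along the deterministic solution, the distribution is a product of Poissons for all time. -/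

import Mathlib

open Finset

/-- Monomial `u^v = ∏ i, u i ^ v i` (with the convention `0^0 = 1`). -/
noncomputable def monPow {d : ℕ} (u : Fin d → ℝ) (v : Fin d → ℕ) : ℝ :=
  ∏ i, u i ^ v i

/-- The reaction vector `ζ = y' - y`, viewed as a real vector. -/
def zetaVec {d : ℕ} (y y' : Fin d → ℕ) : Fin d → ℝ :=
  fun i => (y' i : ℝ) - (y i : ℝ)

/-- Stochastic mass action intensity `λ_k(x) = κ_k ∏_i x_i!/(x_i - y_{ki})!`,
taken to be `0` when `x` is not componentwise at least `y_k`. -/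
noncomputable def intensity {d : ℕ} (κk : ℝ) (yk : Fin d → ℕ) (x : Fin d → ℕ) : ℝ :=
  κk * ∏ i, ((x i).descFactorial (yk i) : ℝ)

/-- Right-hand side of the deterministic mass-action ODE: `Σ_k κ_k c^{y_k} ζ_k`. -/
noncomputable def massActionRHS {d K : ℕ} (κ : Fin K → ℝ) (y y' : Fin K → Fin d → ℕ)
    (c : Fin d → ℝ) : Fin d → ℝ :=
  ∑ k, (κ k * monPow c (y k)) • zetaVec (y k) (y' k)

/-- `c` is differentiable on `[0,∞)` and solves the mass-action ODE there. -/
def solvesMassAction {d K : ℕ} (κ : Fin K → ℝ) (y y' : Fin K → Fin d → ℕ)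
    (c : ℝ → Fin d → ℝ) : Prop :=
  ∀ t ≥ (0:ℝ), HasDerivWithinAt c (massActionRHS κ y y' (c t)) (Set.Ici 0) t

/-- The dynamical and restricted (DR) complex balance condition: for every complex `z`
with `‖z‖₁ ≥ 2` and every `t ≥ 0`,
`Σ_{k : y_k = z} κ_k c(t)^z = Σ_{k : y'_k = z} κ_k c(t)^{y_k}`. -/
def DRcondition {d K : ℕ} (κ : Fin K → ℝ) (y y' : Fin K → Fin d → ℕ)
    (c : ℝ → Fin d → ℝ) : Prop :=
  ∀ z : Fin d → ℕ, 2 ≤ ∑ i, z i → ∀ t ≥ (0:ℝ),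
    ∑ k ∈ univ.filter (fun k => y k = z), κ k * monPow (c t) z
      = ∑ k ∈ univ.filter (fun k => y' k = z), κ k * monPow (c t) (y k)

/-- `P` solves the chemical master equation on `[0,∞)`:
`∂ₜ P(x,t) = Σ_k λ_k(x-ζ_k) P(x-ζ_k,t) 1{x-ζ_k ≥ 0} - Σ_k λ_k(x) P(x,t)`. -/
def solvesCME {d K : ℕ} (κ : Fin K → ℝ) (y y' : Fin K → Fin d → ℕ)
    (P : (Fin d → ℕ) → ℝ → ℝ) : Prop :=
  ∀ x : Fin d → ℕ, ∀ t ≥ (0:ℝ),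
    HasDerivWithinAt (P x)
      ((∑ k, if ∀ i, y' k i ≤ x i + y k i then
          intensity (κ k) (y k) (fun i => x i + y k i - y' k i)
            * P (fun i => x i + y k i - y' k i) t
        else 0)
       - ∑ k, intensity (κ k) (y k) x * P x t)
      (Set.Ici 0) t

/-- The product-Poisson probability mass function `∏_i e^{-c_i} c_i^{x_i}/x_i!`. -/
noncomputable def productPoisson {d : ℕ} (c : Fin d → ℝ) (x : Fin d → ℕ) : ℝ :=
  ∏ i, Real.exp (-(c i)) * (c i) ^ (x i) / (x i).factorial

/-- The diffusion matrix of the Poisson representation: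
`B_{ij}(u) = Σ_k κ_k u^{y_k} (y'_{ki} y'_{kj} - y_{ki} y_{kj} - δ_{ij} ζ_{ki})`. -/
noncomputable def Bmat {d K : ℕ} (κ : Fin K → ℝ) (y y' : Fin K → Fin d → ℕ)
    (u : Fin d → ℝ) (i j : Fin d) : ℝ :=
  ∑ k, κ k * monPow u (y k) *
    ((y' k i : ℝ) * (y' k j : ℝ) - (y k i : ℝ) * (y k j : ℝ)
      - (if i = j then (1:ℝ) else 0) * zetaVec (y k) (y' k) i)


namespace PoisAux

variable {d : ℕ}

noncomputable def Mfun (u : Fin d → ℝ) (x v : Fin d → ℕ) : ℝ :=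
  ∏ i, ((x i).descFactorial (v i) : ℝ) / u i ^ (v i)

noncomputable def xiF (u : Fin d → ℝ) (x : Fin d → ℕ) (i : Fin d) : ℝ := (x i : ℝ) / u i - 1

noncomputable def qF (u : Fin d → ℝ) (x : Fin d → ℕ) (i : Fin d) : ℝ := (x i : ℝ) / (u i) ^ 2

noncomputable def etaF (u : Fin d → ℝ) (x : Fin d → ℕ) (i j : Fin d) : ℝ :=
  xiF u x i * xiF u x j - (if i = j then (1:ℝ) else 0) * qF u x i

lemma coord_shift (a p q : ℕ) (u : ℝ) (hu : 0 < u) (h : q ≤ a + p) :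
    ((a + p - q).descFactorial p : ℝ) * (Real.exp (-u) * u ^ (a + p - q) / ((a + p - q).factorial))
      = u ^ p * (Real.exp (-u) * u ^ a / (a.factorial)) * ((a.descFactorial q : ℝ) / u ^ q) := by
  rcases le_or_gt q a with hqa | haq
  · obtain ⟨b, rfl⟩ := Nat.exists_eq_add_of_le hqa
    have e1 : q + b + p - q = b + p := by omega
    rw [e1]
    have d1 : ((b + p).descFactorial p : ℝ) * (b.factorial) = ((b+p).factorial) := by
      have := Nat.factorial_mul_descFactorial (Nat.le_add_left p b)
      rw [Nat.add_sub_cancel] at this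
      rw [mul_comm]; exact_mod_cast this
    have d2 : ((q + b).descFactorial q : ℝ) * (b.factorial) = ((q+b).factorial) := by
      have := Nat.factorial_mul_descFactorial (Nat.le_add_right q b)
      rw [Nat.add_sub_cancel_left] at this
      rw [mul_comm]; exact_mod_cast this
    have hb : (b.factorial : ℝ) ≠ 0 := Nat.cast_ne_zero.2 (Nat.factorial_ne_zero b)
    have hbp : ((b+p).factorial : ℝ) ≠ 0 := Nat.cast_ne_zero.2 (Nat.factorial_ne_zero _)
    have hqb : ((q+b).factorial : ℝ) ≠ 0 := Nat.cast_ne_zero.2 (Nat.factorial_ne_zero _)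
    have hu' : u ≠ 0 := ne_of_gt hu
    have D1 : ((b + p).descFactorial p : ℝ) = ((b+p).factorial) / (b.factorial) := by
      rw [eq_div_iff hb]; linarith [d1]
    have D2 : ((q + b).descFactorial q : ℝ) = ((q+b).factorial) / (b.factorial) := by
      rw [eq_div_iff hb]; linarith [d2]
    rw [D1, D2]
    field_simp
    ring_nf
  · have h1 : (a + p - q).descFactorial p = 0 :=
      Nat.descFactorial_eq_zero_iff_lt.2 (by omega)
    have h2 : a.descFactorial q = 0 := Nat.descFactorial_eq_zero_iff_lt.2 haq
    simp [h1, h2]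

lemma classify (v : Fin d → ℕ) (h : ∑ i, v i ≤ 2) :
    v = 0 ∨ (∃ a, v = Pi.single a 1) ∨ (∃ a, v = Pi.single a 2) ∨
      (∃ a b, a ≠ b ∧ v = Pi.single a 1 + Pi.single b 1) := by
  by_cases h0 : ∀ i, v i = 0
  · left; funext i; exact h0 i
  · push_neg at h0
    obtain ⟨a, ha⟩ := h0
    have hsum : ∀ i : Fin d, v i ≤ ∑ j, v j := fun i =>
      Finset.single_le_sum (fun j _ => Nat.zero_le _) (mem_univ i)
    have hpair : ∀ i j : Fin d, i ≠ j → v i + v j ≤ ∑ k, v k := by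
      intro i j hij
      have h1 : v j ≤ ∑ k ∈ univ.erase i, v k :=
        Finset.single_le_sum (fun k _ => Nat.zero_le _) (Finset.mem_erase.2 ⟨hij.symm, mem_univ j⟩)
      have h2 : v i + ∑ k ∈ univ.erase i, v k = ∑ k, v k :=
        Finset.add_sum_erase univ v (mem_univ i)
      omega
    rcases Nat.lt_or_ge (v a) 2 with hva | hva
    · have hva1 : v a = 1 := by omega
      by_cases h1 : ∀ b, b ≠ a → v b = 0
      · right; left; exact ⟨a, funext fun i => by
          rcases eq_or_ne i a with rfl | hia
          · simp [hva1]
          · simp [Pi.single_eq_of_ne hia, h1 i hia]⟩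
      · push_neg at h1
        obtain ⟨b, hba, hb⟩ := h1
        have hvb1 : v b = 1 := by
          have := hpair a b (Ne.symm hba); omega
        right; right; right
        refine ⟨a, b, Ne.symm hba, funext fun i => ?_⟩
        rcases eq_or_ne i a with rfl | hia
        · simp [Pi.single_eq_of_ne (Ne.symm hba), hva1]
        · rcases eq_or_ne i b with rfl | hib
          · simp [Pi.single_eq_of_ne hia, hvb1]
          · have hz : v i = 0 := by
              by_contra hvi
              have h1 : v a + ∑ k ∈ univ.erase a, v k = ∑ k, v k :=
                Finset.add_sum_erase univ v (mem_univ a)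
              have h2 : v b + ∑ k ∈ (univ.erase a).erase b, v k = ∑ k ∈ univ.erase a, v k :=
                Finset.add_sum_erase _ v (Finset.mem_erase.2 ⟨hba, mem_univ b⟩)
              have h3 : v i ≤ ∑ k ∈ (univ.erase a).erase b, v k :=
                Finset.single_le_sum (fun k _ => Nat.zero_le _)
                  (Finset.mem_erase.2 ⟨hib, Finset.mem_erase.2 ⟨hia, mem_univ i⟩⟩)
              omega
            simp [Pi.single_eq_of_ne hia, Pi.single_eq_of_ne hib, hz]
    · have hva2 : v a = 2 := by have := hsum a; omega
      right; right; left
      refine ⟨a, funext fun i => ?_⟩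
      rcases eq_or_ne i a with rfl | hia
      · simp [hva2]
      · have := hpair a i (Ne.symm hia)
        simp [Pi.single_eq_of_ne hia]; omega

lemma sum_single_eq (a : Fin d) (n : ℕ) (F : ℕ → Fin d → ℝ) (hF : ∀ i, F 0 i = 0) :
    ∑ i, F ((Pi.single a n : Fin d → ℕ) i) i = F n a := by
  rw [Finset.sum_eq_single a]
  · rw [Pi.single_eq_same]
  · intro b _ hba; rw [Pi.single_eq_of_ne hba]; exact hF b
  · intro h; exact absurd (mem_univ a) h

lemma sum_single_mul (a : Fin d) (n : ℕ) (f : Fin d → ℝ) :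
    ∑ i, ((Pi.single a n : Fin d → ℕ) i : ℝ) * f i = (n : ℝ) * f a :=
  sum_single_eq a n (fun m i => (m : ℝ) * f i) (fun i => by simp)

lemma sum_single_mul2 (a : Fin d) (n : ℕ) (f : Fin d → ℝ) :
    ∑ i, ((Pi.single a n : Fin d → ℕ) i : ℝ) * (((Pi.single a n : Fin d → ℕ) i : ℝ) - 1) * f i
      = (n : ℝ) * ((n : ℝ) - 1) * f a :=
  sum_single_eq a n (fun m i => (m : ℝ) * ((m : ℝ) - 1) * f i) (fun i => by simp)

lemma sum_pair_mul (a b : Fin d) (f : Fin d → ℝ) :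
    ∑ i, ((Pi.single a 1 + Pi.single b 1 : Fin d → ℕ) i : ℝ) * f i = f a + f b := by
  have h : ∀ i, ((Pi.single a 1 + Pi.single b 1 : Fin d → ℕ) i : ℝ) * f i
      = ((Pi.single a 1 : Fin d → ℕ) i : ℝ) * f i + ((Pi.single b 1 : Fin d → ℕ) i : ℝ) * f i := by
    intro i; rw [Pi.add_apply]; push_cast; ring
  rw [Finset.sum_congr rfl (fun i _ => h i), Finset.sum_add_distrib,
    sum_single_mul, sum_single_mul]
  push_cast; ring

lemma Mfun_single (u : Fin d → ℝ) (x : Fin d → ℕ) (a : Fin d) (n : ℕ) :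
    Mfun u x (Pi.single a n) = ((x a).descFactorial n : ℝ) / u a ^ n := by
  unfold Mfun
  rw [Finset.prod_eq_single a]
  · rw [Pi.single_eq_same]
  · intro b _ hba; rw [Pi.single_eq_of_ne hba]; simp
  · intro h; exact absurd (mem_univ a) h

lemma Mfun_pair (u : Fin d → ℝ) (x : Fin d → ℕ) (a b : Fin d) (hab : a ≠ b) :
    Mfun u x (Pi.single a 1 + Pi.single b 1) = ((x a : ℝ) / u a) * ((x b : ℝ) / u b) := by
  unfold Mfun
  rw [← Finset.prod_subset (Finset.subset_univ ({a, b} : Finset (Fin d)))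
    (fun i _ hi => ?_), Finset.prod_pair hab]
  · have h1 : (Pi.single a 1 + Pi.single b 1 : Fin d → ℕ) a = 1 := by
      simp [Pi.single_eq_of_ne hab]
    have h2 : (Pi.single a 1 + Pi.single b 1 : Fin d → ℕ) b = 1 := by
      simp [Pi.single_eq_of_ne (Ne.symm hab)]
    rw [h1, h2]; simp
  · have hia : i ≠ a := fun h => hi (by simp [h])
    have hib : i ≠ b := fun h => hi (by simp [h])
    have : (Pi.single a 1 + Pi.single b 1 : Fin d → ℕ) i = 0 := by
      simp [Pi.single_eq_of_ne hia, Pi.single_eq_of_ne hib]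
    rw [this]; simp

lemma cast_desc_two (n : ℕ) : ((n.descFactorial 2 : ℕ) : ℝ) = (n : ℝ) * ((n : ℝ) - 1) := by
  rcases n with _ | m
  · simp
  · have : (m + 1).descFactorial 2 = m * (m + 1) := by
      simp [Nat.descFactorial_succ, Nat.descFactorial_one]
    rw [this]; push_cast; ring

lemma key_binary (u : Fin d → ℝ) (hu : ∀ i, 0 < u i) (x : Fin d → ℕ)
    (v : Fin d → ℕ) (hv : ∑ i, v i ≤ 2) :
    2 * Mfun u x v = 2 + 2 * (∑ a, (v a : ℝ) * xiF u x a)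
      + ((∑ a, (v a : ℝ) * xiF u x a) ^ 2 - (∑ a, (v a : ℝ) * (xiF u x a) ^ 2)
         - ∑ a, (v a : ℝ) * ((v a : ℝ) - 1) * qF u x a) := by
  rcases classify v hv with rfl | ⟨a, rfl⟩ | ⟨a, rfl⟩ | ⟨a, b, hab, rfl⟩
  · simp [Mfun]
  · rw [Mfun_single, sum_single_mul, sum_single_mul, sum_single_mul2]
    have hx : ((x a).descFactorial 1 : ℝ) = (x a : ℝ) := by
      rw [Nat.descFactorial_one]
    rw [hx]
    unfold xiF qF
    have hu' : u a ≠ 0 := ne_of_gt (hu a)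
    push_cast
    field_simp
    ring
  · rw [Mfun_single, sum_single_mul, sum_single_mul, sum_single_mul2, cast_desc_two]
    unfold xiF qF
    have hu' : u a ≠ 0 := ne_of_gt (hu a)
    push_cast
    field_simp
    ring
  · rw [Mfun_pair u x a b hab, sum_pair_mul, sum_pair_mul]
    have hz : ∑ i, (((Pi.single a 1 + Pi.single b 1 : Fin d → ℕ) i : ℝ))
        * (((Pi.single a 1 + Pi.single b 1 : Fin d → ℕ) i : ℝ) - 1) * qF u x i = 0 := by
      refine Finset.sum_eq_zero fun i _ => ?_
      have hle : (Pi.single a 1 + Pi.single b 1 : Fin d → ℕ) i ≤ 1 := by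
        rw [Pi.add_apply]
        rcases eq_or_ne i a with rfl | hia
        · rw [Pi.single_eq_same, Pi.single_eq_of_ne hab]; omega
        · rw [Pi.single_eq_of_ne hia]
          rcases eq_or_ne i b with rfl | hib
          · rw [Pi.single_eq_same]
          · rw [Pi.single_eq_of_ne hib]; omega
      interval_cases h : (Pi.single a 1 + Pi.single b 1 : Fin d → ℕ) i <;> simp [h]
    rw [hz]
    unfold xiF
    have hua : u a ≠ 0 := ne_of_gt (hu a)
    have hub : u b ≠ 0 := ne_of_gt (hu b)
    field_simp
    ring

lemma double_sum_eq (u : Fin d → ℝ) (x : Fin d → ℕ) (w : Fin d → ℝ) :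
    ∑ a, ∑ b, (w a * w b - (if a = b then (1:ℝ) else 0) * w a) * etaF u x a b
      = (∑ a, w a * xiF u x a) ^ 2 - (∑ a, w a * (xiF u x a) ^ 2)
        - ∑ a, w a * (w a - 1) * qF u x a := by
  have expand : ∀ a b : Fin d,
      (w a * w b - (if a = b then (1:ℝ) else 0) * w a) * etaF u x a b
      = (w a * xiF u x a) * (w b * xiF u x b)
        - (if a = b then w a * w a * qF u x a + w a * xiF u x a * xiF u x b
            - w a * qF u x a else 0) := by
    intro a b
    unfold etaF
    split_ifs with h
    · subst h; ring
    · ring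
  have inner : ∀ a : Fin d,
      ∑ b, (w a * w b - (if a = b then (1:ℝ) else 0) * w a) * etaF u x a b
      = (w a * xiF u x a) * (∑ b, w b * xiF u x b)
        - (w a * w a * qF u x a + w a * xiF u x a * xiF u x a - w a * qF u x a) := by
    intro a
    rw [Finset.sum_congr rfl (fun b _ => expand a b), Finset.sum_sub_distrib,
      ← Finset.mul_sum, Finset.sum_ite_eq univ a
        (fun b => w a * w a * qF u x a + w a * xiF u x a * xiF u x b - w a * qF u x a)]
    simp
  rw [Finset.sum_congr rfl (fun a _ => inner a), Finset.sum_sub_distrib, ← Finset.sum_mul,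
    ← pow_two]
  have : ∑ a, (w a * w a * qF u x a + w a * xiF u x a * xiF u x a - w a * qF u x a)
      = (∑ a, w a * (xiF u x a) ^ 2) + ∑ a, w a * (w a - 1) * qF u x a := by
    rw [← Finset.sum_add_distrib]
    exact Finset.sum_congr rfl fun a _ => by ring
  rw [this]; ring

lemma outflow_eq (u : Fin d → ℝ) (hu : ∀ i, 0 < u i) (x : Fin d → ℕ) (κk : ℝ) (yk : Fin d → ℕ) :
    intensity κk yk x * productPoisson u x
      = κk * monPow u yk * productPoisson u x * Mfun u x yk := by
  unfold intensity productPoisson monPow Mfun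
  rw [mul_assoc, ← Finset.prod_mul_distrib, mul_assoc, mul_assoc, ← Finset.prod_mul_distrib,
    ← Finset.prod_mul_distrib]
  refine congrArg (κk * ·) (Finset.prod_congr rfl fun i _ => ?_)
  have hui : u i ≠ 0 := ne_of_gt (hu i)
  field_simp

lemma inflow_eq (u : Fin d → ℝ) (hu : ∀ i, 0 < u i) (x : Fin d → ℕ) (κk : ℝ)
    (yk y'k : Fin d → ℕ) :
    (if ∀ i, y'k i ≤ x i + yk i then
        intensity κk yk (fun i => x i + yk i - y'k i)
          * productPoisson u (fun i => x i + yk i - y'k i)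
      else 0)
    = κk * monPow u yk * productPoisson u x * Mfun u x y'k := by
  by_cases h : ∀ i, y'k i ≤ x i + yk i
  · rw [if_pos h]
    unfold intensity productPoisson monPow Mfun
    rw [mul_assoc, ← Finset.prod_mul_distrib, mul_assoc, mul_assoc, ← Finset.prod_mul_distrib,
      ← Finset.prod_mul_distrib]
    refine congrArg (κk * ·) (Finset.prod_congr rfl fun i _ => ?_)
    simpa [mul_assoc] using coord_shift (x i) (yk i) (y'k i) (u i) (hu i) (h i)
  · rw [if_neg h]
    push_neg at h
    obtain ⟨i, hi⟩ := h
    have hz : ((x i).descFactorial (y'k i) : ℝ) = 0 := by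
      rw [Nat.descFactorial_eq_zero_iff_lt.2 (by omega)]; simp
    have : Mfun u x y'k = 0 :=
      Finset.prod_eq_zero (mem_univ i) (by rw [hz]; simp)
    rw [this, mul_zero]

end PoisAux

/-- Conjecture 3.1 (proved in the paper): for a binary reaction network, if `c > 0` solves
the mass-action ODE with `c(0) = c̃` and the Poisson-representation diffusion matrix vanishes
along `c`, then the product-Poisson function with parameter `c(t)` solves the chemical master
equation, with initial condition the product-Poisson distribution with parameter `c̃`. -/
theorem binary_zero_diffusion_implies_productPoisson_solution
    {d K : ℕ} (κ : Fin K → ℝ) (y y' : Fin K → Fin d → ℕ)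
    (hκ : ∀ k, 0 ≤ κ k) (hyy' : ∀ k, y' k ≠ y k)
    (hbin : ∀ k, (∑ i, y k i) ≤ 2 ∧ (∑ i, y' k i) ≤ 2)
    (ctilde : Fin d → ℝ) (hctilde : ∀ i, 0 < ctilde i)
    (c : ℝ → Fin d → ℝ) (hcpos : ∀ t ≥ (0:ℝ), ∀ i, 0 < c t i)
    (hc0 : c 0 = ctilde)
    (hODE : solvesMassAction κ y y' c)
    (hB : ∀ i j : Fin d, ∀ t ≥ (0:ℝ), Bmat κ y y' (c t) i j = 0) :
    solvesCME κ y y' (fun x t => productPoisson (c t) x)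
      ∧ ∀ x : Fin d → ℕ, productPoisson (c 0) x = productPoisson ctilde x := by
  classical
  refine ⟨?_, fun x => by rw [hc0]⟩
  intro x t ht
  have hu : ∀ i, 0 < c t i := hcpos t ht
  have hr : HasDerivWithinAt c (massActionRHS κ y y' (c t)) (Set.Ici 0) t := hODE t ht
  set u : Fin d → ℝ := c t with hudef
  set r : Fin d → ℝ := massActionRHS κ y y' u with hrdef
  set ξ : Fin d → ℝ := PoisAux.xiF u x with hxidef
  set q : Fin d → ℝ := PoisAux.qF u x with hqdef
  set M : (Fin d → ℕ) → ℝ := PoisAux.Mfun u x with hMdef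
  have hci : ∀ i, HasDerivWithinAt (fun s => c s i) (r i) (Set.Ici 0) t :=
    hasDerivWithinAt_pi.mp hr
  -- Step A: derivative of the product-Poisson function
  have hfd : ∀ i ∈ (univ : Finset (Fin d)),
      HasDerivWithinAt (fun s => Real.exp (-(c s i)) * (c s i) ^ (x i) / ((x i).factorial : ℝ))
        ((Real.exp (-(u i)) * (u i) ^ (x i) / ((x i).factorial : ℝ)) * (r i * ξ i))
        (Set.Ici 0) t := by
    intro i _
    have h1 : HasDerivWithinAt (fun s => Real.exp (-(c s i)))
        (Real.exp (-(c t i)) * (-(r i))) (Set.Ici 0) t := ((hci i).neg).exp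
    have h2 : HasDerivWithinAt (fun s => (c s i) ^ (x i))
        (((x i : ℕ) : ℝ) * (c t i) ^ (x i - 1) * (r i)) (Set.Ici 0) t := (hci i).pow (x i)
    have h3 := (h1.mul h2).div_const ((x i).factorial : ℝ)
    convert h3 using 1
    · rfl
    · rfl
    · rfl
    have hui : u i ≠ 0 := ne_of_gt (hu i)
    have hfac : ((x i).factorial : ℝ) ≠ 0 := Nat.cast_ne_zero.2 (Nat.factorial_ne_zero _)
    have hpow : ((x i : ℕ) : ℝ) * (u i) ^ (x i - 1) = ((x i : ℕ) : ℝ) * (u i) ^ (x i) / u i := by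
      rcases Nat.eq_zero_or_pos (x i) with h0 | h0
      · simp [h0]
      · obtain ⟨m, hm⟩ := Nat.exists_eq_succ_of_ne_zero (Nat.pos_iff_ne_zero.mp h0)
        rw [hm]
        simp only [Nat.succ_sub_one]
        rw [pow_succ]
        field_simp
      -- end hpow
    rw [hxidef]
    unfold PoisAux.xiF
    rw [hpow]
    field_simp
    ring_nf
    rw [hudef]
    ring
  have hprod := HasDerivWithinAt.finset_prod hfd
  have hP : ∏ j, Real.exp (-(u j)) * (u j) ^ (x j) / ((x j).factorial : ℝ)
      = productPoisson u x := rfl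
  have hval : ∑ i, (∏ j ∈ univ.erase i,
        Real.exp (-(u j)) * (u j) ^ (x j) / ((x j).factorial : ℝ))
          • ((Real.exp (-(u i)) * (u i) ^ (x i) / ((x i).factorial : ℝ)) * (r i * ξ i))
      = productPoisson u x * ∑ i, r i * ξ i := by
    rw [Finset.mul_sum]
    refine Finset.sum_congr rfl fun i _ => ?_
    rw [smul_eq_mul, ← mul_assoc,
      Finset.prod_erase_mul univ _ (mem_univ i), hP]
  -- Step B: the CME right-hand side equals the same value
  have hin : ∀ k : Fin K,
      (if ∀ i, y' k i ≤ x i + y k i then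
          intensity (κ k) (y k) (fun i => x i + y k i - y' k i)
            * productPoisson u (fun i => x i + y k i - y' k i)
        else 0)
      = κ k * monPow u (y k) * productPoisson u x * M (y' k) :=
    fun k => PoisAux.inflow_eq u hu x (κ k) (y k) (y' k)
  have hout : ∀ k : Fin K, intensity (κ k) (y k) x * productPoisson u x
      = κ k * monPow u (y k) * productPoisson u x * M (y k) :=
    fun k => PoisAux.outflow_eq u hu x (κ k) (y k)
  have hG : ∀ v : Fin d → ℕ, (∑ i, v i ≤ 2) →
      2 * M v = 2 + 2 * (∑ a, (v a : ℝ) * ξ a)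
        + ((∑ a, (v a : ℝ) * ξ a) ^ 2 - (∑ a, (v a : ℝ) * (ξ a) ^ 2)
           - ∑ a, (v a : ℝ) * ((v a : ℝ) - 1) * q a) :=
    fun v hv => PoisAux.key_binary u hu x v hv
  have hzeta : ∀ k, ∑ i, zetaVec (y k) (y' k) i * ξ i
      = (∑ a, (y' k a : ℝ) * ξ a) - (∑ a, (y k a : ℝ) * ξ a) := by
    intro k
    rw [← Finset.sum_sub_distrib]
    exact Finset.sum_congr rfl fun i _ => by unfold zetaVec; ring
  have hrsum : ∑ i, r i * ξ i
      = ∑ k, κ k * monPow u (y k) * ∑ i, zetaVec (y k) (y' k) i * ξ i := by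
    have hre : ∀ i, r i = ∑ k, κ k * monPow u (y k) * zetaVec (y k) (y' k) i := by
      intro i
      rw [hrdef]
      unfold massActionRHS
      rw [Finset.sum_apply]
      exact Finset.sum_congr rfl fun k _ => by simp [smul_eq_mul]
    calc ∑ i, r i * ξ i
        = ∑ i, ∑ k, κ k * monPow u (y k) * zetaVec (y k) (y' k) i * ξ i := by
          refine Finset.sum_congr rfl fun i _ => ?_
          rw [hre i, Finset.sum_mul]
      _ = ∑ k, ∑ i, κ k * monPow u (y k) * zetaVec (y k) (y' k) i * ξ i := Finset.sum_comm
      _ = ∑ k, κ k * monPow u (y k) * ∑ i, zetaVec (y k) (y' k) i * ξ i := by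
          refine Finset.sum_congr rfl fun k _ => ?_
          rw [Finset.mul_sum]
          exact Finset.sum_congr rfl fun i _ => by ring
  have hBzero : ∑ a, ∑ b, Bmat κ y y' u a b * PoisAux.etaF u x a b = 0 :=
    Finset.sum_eq_zero fun a _ => Finset.sum_eq_zero fun b _ => by
      rw [hudef, hB a b t ht, zero_mul]
  have hBswap : ∑ a, ∑ b, Bmat κ y y' u a b * PoisAux.etaF u x a b
      = ∑ k, κ k * monPow u (y k) *
          (((∑ a, (y' k a : ℝ) * ξ a) ^ 2 - (∑ a, (y' k a : ℝ) * (ξ a) ^ 2)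
              - ∑ a, (y' k a : ℝ) * ((y' k a : ℝ) - 1) * q a)
           - ((∑ a, (y k a : ℝ) * ξ a) ^ 2 - (∑ a, (y k a : ℝ) * (ξ a) ^ 2)
              - ∑ a, (y k a : ℝ) * ((y k a : ℝ) - 1) * q a)) := by
    have step1 : ∀ a b : Fin d, Bmat κ y y' u a b * PoisAux.etaF u x a b
        = ∑ k, κ k * monPow u (y k) *
            ((((y' k a : ℝ) * (y' k b : ℝ) - (if a = b then (1:ℝ) else 0) * (y' k a : ℝ))
              - ((y k a : ℝ) * (y k b : ℝ) - (if a = b then (1:ℝ) else 0) * (y k a : ℝ)))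
              * PoisAux.etaF u x a b) := by
      intro a b
      unfold Bmat
      rw [Finset.sum_mul]
      refine Finset.sum_congr rfl fun k _ => ?_
      unfold zetaVec
      ring
    calc ∑ a, ∑ b, Bmat κ y y' u a b * PoisAux.etaF u x a b
        = ∑ a, ∑ b, ∑ k, κ k * monPow u (y k) *
            ((((y' k a : ℝ) * (y' k b : ℝ) - (if a = b then (1:ℝ) else 0) * (y' k a : ℝ))
              - ((y k a : ℝ) * (y k b : ℝ) - (if a = b then (1:ℝ) else 0) * (y k a : ℝ)))
              * PoisAux.etaF u x a b) := by
          exact Finset.sum_congr rfl fun a _ => Finset.sum_congr rfl fun b _ => step1 a b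
      _ = ∑ k, ∑ a, ∑ b, κ k * monPow u (y k) *
            ((((y' k a : ℝ) * (y' k b : ℝ) - (if a = b then (1:ℝ) else 0) * (y' k a : ℝ))
              - ((y k a : ℝ) * (y k b : ℝ) - (if a = b then (1:ℝ) else 0) * (y k a : ℝ)))
              * PoisAux.etaF u x a b) := by
          rw [Finset.sum_congr rfl fun a (_ : a ∈ univ) => (Finset.sum_comm : _ = _)]
          exact Finset.sum_comm
      _ = ∑ k, κ k * monPow u (y k) *
            ((∑ a, ∑ b, ((y' k a : ℝ) * (y' k b : ℝ) - (if a = b then (1:ℝ) else 0) * (y' k a : ℝ))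
                * PoisAux.etaF u x a b)
             - ∑ a, ∑ b, ((y k a : ℝ) * (y k b : ℝ) - (if a = b then (1:ℝ) else 0) * (y k a : ℝ))
                * PoisAux.etaF u x a b) := by
          refine Finset.sum_congr rfl fun k _ => ?_
          have inner_eq : ∀ a : Fin d,
              ∑ b, κ k * monPow u (y k) *
                ((((y' k a : ℝ) * (y' k b : ℝ) - (if a = b then (1:ℝ) else 0) * (y' k a : ℝ))
                  - ((y k a : ℝ) * (y k b : ℝ) - (if a = b then (1:ℝ) else 0) * (y k a : ℝ)))
                  * PoisAux.etaF u x a b)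
              = κ k * monPow u (y k) *
                  (∑ b, ((y' k a : ℝ) * (y' k b : ℝ) - (if a = b then (1:ℝ) else 0) * (y' k a : ℝ))
                    * PoisAux.etaF u x a b)
                - κ k * monPow u (y k) *
                  (∑ b, ((y k a : ℝ) * (y k b : ℝ) - (if a = b then (1:ℝ) else 0) * (y k a : ℝ))
                    * PoisAux.etaF u x a b) := by
            intro a
            rw [← mul_sub, ← Finset.mul_sum, ← Finset.sum_sub_distrib]
            congr 1
            exact Finset.sum_congr rfl fun b _ => by ring
          rw [Finset.sum_congr rfl fun a (_ : a ∈ univ) => inner_eq a,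
            Finset.sum_sub_distrib, ← Finset.mul_sum, ← Finset.mul_sum, ← mul_sub]
      _ = _ := by
          refine Finset.sum_congr rfl fun k _ => ?_
          rw [PoisAux.double_sum_eq u x (fun a => (y' k a : ℝ)),
            PoisAux.double_sum_eq u x (fun a => (y k a : ℝ))]
  have hsum1 : ∑ k, κ k * monPow u (y k)
        * (M (y' k) - M (y k) - ∑ i, zetaVec (y k) (y' k) i * ξ i)
      = (1/2) * ∑ a, ∑ b, Bmat κ y y' u a b * PoisAux.etaF u x a b := by
    rw [hBswap, Finset.mul_sum]
    refine Finset.sum_congr rfl fun k _ => ?_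
    have h1 := hG (y k) (hbin k).1
    have h2 := hG (y' k) (hbin k).2
    have h3 := hzeta k
    have h4 : M (y' k) - M (y k) - ∑ i, zetaVec (y k) (y' k) i * ξ i
        = (1/2) * (((∑ a, (y' k a : ℝ) * ξ a) ^ 2 - (∑ a, (y' k a : ℝ) * (ξ a) ^ 2)
              - ∑ a, (y' k a : ℝ) * ((y' k a : ℝ) - 1) * q a)
           - ((∑ a, (y k a : ℝ) * ξ a) ^ 2 - (∑ a, (y k a : ℝ) * (ξ a) ^ 2)
              - ∑ a, (y k a : ℝ) * ((y k a : ℝ) - 1) * q a)) := by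
      rw [h3]; linarith
    rw [h4]; ring
  -- assemble
  have hdiff : ∑ k, κ k * monPow u (y k) * (M (y' k) - M (y k))
      = ∑ k, κ k * monPow u (y k) * ∑ i, zetaVec (y k) (y' k) i * ξ i := by
    have hzero : ∑ k, κ k * monPow u (y k) * (M (y' k) - M (y k))
        - ∑ k, κ k * monPow u (y k) * ∑ i, zetaVec (y k) (y' k) i * ξ i = 0 := by
      rw [← Finset.sum_sub_distrib]
      have : ∀ k ∈ (univ : Finset (Fin K)),
          κ k * monPow u (y k) * (M (y' k) - M (y k))
            - κ k * monPow u (y k) * ∑ i, zetaVec (y k) (y' k) i * ξ i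
          = κ k * monPow u (y k)
            * (M (y' k) - M (y k) - ∑ i, zetaVec (y k) (y' k) i * ξ i) :=
        fun k _ => by ring
      rw [Finset.sum_congr rfl this, hsum1, hBzero, mul_zero]
    linarith
  have hstepB :
      (∑ k, if ∀ i, y' k i ≤ x i + y k i then
          intensity (κ k) (y k) (fun i => x i + y k i - y' k i)
            * productPoisson u (fun i => x i + y k i - y' k i)
        else 0)
      - (∑ k, intensity (κ k) (y k) x * productPoisson u x)
      = productPoisson u x * ∑ i, r i * ξ i := by
    rw [Finset.sum_congr rfl (fun k _ => hin k), Finset.sum_congr rfl (fun k _ => hout k),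
      ← Finset.sum_sub_distrib]
    have e1 : ∑ k, (κ k * monPow u (y k) * productPoisson u x * M (y' k)
        - κ k * monPow u (y k) * productPoisson u x * M (y k))
        = productPoisson u x * ∑ k, κ k * monPow u (y k) * (M (y' k) - M (y k)) := by
      rw [Finset.mul_sum]
      exact Finset.sum_congr rfl fun k _ => by ring
    rw [e1, hdiff, hrsum]
  -- conclude
  show HasDerivWithinAt (fun s => productPoisson (c s) x)
    ((∑ k, if ∀ i, y' k i ≤ x i + y k i then
          intensity (κ k) (y k) (fun i => x i + y k i - y' k i)
            * productPoisson u (fun i => x i + y k i - y' k i)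
        else 0)
      - ∑ k, intensity (κ k) (y k) x * productPoisson u x) (Set.Ici 0) t
  rw [hstepB, ← hval]
  have hfun : (∏ i, fun s => Real.exp (-(c s i)) * (c s i) ^ (x i) / ((x i).factorial : ℝ))
      = fun s => productPoisson (c s) x := by
    funext s; simp only [Finset.prod_apply, productPoisson]
  rw [hfun] at hprod
  exact hprod
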